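/- Let G be a finite simple graph whose complement G^c is chordal, let r ≥ 2, and let F, F' ⊆ V(G) with |F| = |F'| = r, F ≠ F', and both G[F] and G[F'] connected. If F_1 and F_1' are the unique facets of Ind_r(G) containing F and F' respectively, then F_1 ≠ F_1'. -/

import Mathlib

/-- A set `W` of vertices is `r`-independent in `G` if every connected component
of the induced subgraph `G[W]` has at most `r` vertices. -/
def SimpleGraph.IsRIndepSet {V : Type*} (G : SimpleGraph V) (r : ℕ) (W : Set V) : Prop :=
  ∀ c : (G.induce W).ConnectedComponent, c.supp.ncard ≤ r

/-- A graph is chordal if it has no induced cycle of length at least 4. -/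
def SimpleGraph.IsChordal {V : Type*} (G : SimpleGraph V) : Prop :=
  ∀ n : ℕ, 4 ≤ n → IsEmpty (SimpleGraph.cycleGraph n ↪g G)

private lemma supp_eq_aux {V : Type*} [Fintype V] {G : SimpleGraph V} {r : ℕ}
    {F F₁ : Finset V} (hsub : F ⊆ F₁) (hcard : F.card = r)
    (hconn : (G.induce (F : Set V)).Connected)
    (hF₁ : G.IsRIndepSet r (F₁ : Set V))
    (x : ((F₁ : Set V) : Type _)) (hx : ↑x ∈ F) :
    ((G.induce (F₁ : Set V)).connectedComponentMk x).supp
      = {y : ((F₁ : Set V) : Type _) | ↑y ∈ F} := by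
  have hsub' : (F : Set V) ⊆ (F₁ : Set V) := by exact_mod_cast hsub
  have hle : ∀ y : ((F₁ : Set V) : Type _), ↑y ∈ F →
      (G.induce (F₁ : Set V)).Reachable y x := by
    intro y hy
    have h := hconn.preconnected ⟨↑y, hy⟩ ⟨↑x, hx⟩
    have := h.map (G.induceHomOfLE hsub').toHom
    exact this
  have hsubset : {y : ((F₁ : Set V) : Type _) | ↑y ∈ F}
      ⊆ ((G.induce (F₁ : Set V)).connectedComponentMk x).supp := by
    intro y hy
    simp only [SimpleGraph.ConnectedComponent.mem_supp_iff]
    exact SimpleGraph.ConnectedComponent.sound (hle y hy)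
  have himg : Subtype.val '' {y : ((F₁ : Set V) : Type _) | ↑y ∈ F} = (F : Set V) := by
    ext a
    constructor
    · rintro ⟨y, hy, rfl⟩; exact hy
    · intro ha; exact ⟨⟨a, hsub' ha⟩, ha, rfl⟩
  have hncard : {y : ((F₁ : Set V) : Type _) | ↑y ∈ F}.ncard = r := by
    rw [← Set.ncard_image_of_injective _ Subtype.val_injective, himg]
    rw [Set.ncard_coe_finset]; exact hcard
  symm
  exact Set.eq_of_subset_of_ncard_le hsubset (by rw [hncard]; exact hF₁ _) (Set.toFinite _)

private lemma exists_adj_of_conn {W : Type*} {G : SimpleGraph W} (h : G.Connected)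
    {u v : W} (hne : u ≠ v) : ∃ a b : W, G.Adj a b := by
  obtain ⟨w⟩ := h.preconnected u v
  cases w with
  | nil => exact absurd rfl hne
  | cons h _ => exact ⟨_, _, h⟩


private lemma c4_embed {V : Type*} {H : SimpleGraph V} {a b c d : V}
    (hab : H.Adj a b) (hbc : H.Adj b c) (hcd : H.Adj c d) (hda : H.Adj d a)
    (hac : ¬H.Adj a c) (hbd : ¬H.Adj b d) (hac' : a ≠ c) (hbd' : b ≠ d) :
    Nonempty (SimpleGraph.cycleGraph 4 ↪g H) := by
  have nab := hab.ne
  have nbc := hbc.ne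
  have ncd := hcd.ne
  have nda := hda.ne
  refine ⟨⟨⟨![a, b, c, d], ?_⟩, ?_⟩⟩
  · intro i j h
    fin_cases i <;> fin_cases j <;>
      simp only [Matrix.cons_val_zero, Matrix.cons_val_one, Matrix.head_cons,
        Matrix.cons_val_two, Matrix.tail_cons, Matrix.cons_val_three] at h <;>
      first
        | rfl
        | exact absurd h nab | exact absurd h.symm nab
        | exact absurd h nbc | exact absurd h.symm nbc
        | exact absurd h ncd | exact absurd h.symm ncd
        | exact absurd h.symm nda | exact absurd h nda
        | exact absurd h hac' | exact absurd h.symm hac'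
        | exact absurd h hbd' | exact absurd h.symm hbd'
  · intro i j
    fin_cases i <;> fin_cases j <;>
      simp only [Function.Embedding.coeFn_mk, Matrix.cons_val_zero, Matrix.cons_val_one,
        Matrix.head_cons, Matrix.cons_val_two, Matrix.tail_cons, Matrix.cons_val_three] <;>
      first
        | exact iff_of_true hab (by decide) | exact iff_of_true hab.symm (by decide)
        | exact iff_of_true hbc (by decide) | exact iff_of_true hbc.symm (by decide)
        | exact iff_of_true hcd (by decide) | exact iff_of_true hcd.symm (by decide)
        | exact iff_of_true hda (by decide) | exact iff_of_true hda.symm (by decide)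
        | exact iff_of_false hac (by decide)
        | exact iff_of_false (fun h => hac h.symm) (by decide)
        | exact iff_of_false hbd (by decide)
        | exact iff_of_false (fun h => hbd h.symm) (by decide)
        | exact iff_of_false (fun h => H.irrefl h) (by decide)

/-- If `Gᶜ` is chordal, `r ≥ 2`, `F ≠ F'` are `r`-sets with `G[F]`, `G[F']`
connected, and `F₁`, `F₁'` are facets of `Ind_r(G)` containing `F`, `F'`
respectively, then `F₁ ≠ F₁'`. -/
theorem stmt14 {V : Type*} [Fintype V] (G : SimpleGraph V)
    (hchord : Gᶜ.IsChordal) (r : ℕ) (hr : 2 ≤ r)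
    (F F' : Finset V) (hFF' : F ≠ F')
    (hcard : F.card = r) (hcard' : F'.card = r)
    (hconn : (G.induce (F : Set V)).Connected)
    (hconn' : (G.induce (F' : Set V)).Connected)
    (F₁ F₁' : Finset V)
    (hF₁ : G.IsRIndepSet r (F₁ : Set V))
    (hF₁max : ∀ M' : Finset V, G.IsRIndepSet r (M' : Set V) → F₁ ⊆ M' → M' = F₁)
    (hF₁' : G.IsRIndepSet r (F₁' : Set V))
    (hF₁'max : ∀ M' : Finset V, G.IsRIndepSet r (M' : Set V) → F₁' ⊆ M' → M' = F₁')
    (hsub : F ⊆ F₁) (hsub' : F' ⊆ F₁') :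
    F₁ ≠ F₁' := by
  intro heq
  subst heq
  -- Supports of components
  have hsuppF : ∀ x : ((F₁ : Set V) : Type _), ↑x ∈ F →
      ((G.induce (F₁ : Set V)).connectedComponentMk x).supp
        = {y : ((F₁ : Set V) : Type _) | ↑y ∈ F} :=
    fun x hx => supp_eq_aux hsub hcard hconn hF₁ x hx
  have hsuppF' : ∀ x : ((F₁ : Set V) : Type _), ↑x ∈ F' →
      ((G.induce (F₁ : Set V)).connectedComponentMk x).supp
        = {y : ((F₁ : Set V) : Type _) | ↑y ∈ F'} :=
    fun x hx => supp_eq_aux hsub' hcard' hconn' hF₁ x hx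
  -- F and F' are disjoint
  have hdisj : ∀ a, a ∈ F → a ∉ F' := by
    intro a haF haF'
    apply hFF'
    have h1 := hsuppF ⟨a, by exact_mod_cast hsub haF⟩ haF
    have h2 := hsuppF' ⟨a, by exact_mod_cast hsub haF⟩ haF'
    have h3 : {y : ((F₁ : Set V) : Type _) | ↑y ∈ F}
        = {y : ((F₁ : Set V) : Type _) | ↑y ∈ F'} := by rw [← h1, ← h2]
    ext b
    constructor
    · intro hb
      have : (⟨b, by exact_mod_cast hsub hb⟩ : ((F₁ : Set V) : Type _)) ∈
          {y : ((F₁ : Set V) : Type _) | ↑y ∈ F} := hb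
      rw [h3] at this; exact this
    · intro hb
      have : (⟨b, by exact_mod_cast hsub' hb⟩ : ((F₁ : Set V) : Type _)) ∈
          {y : ((F₁ : Set V) : Type _) | ↑y ∈ F'} := hb
      rw [← h3] at this; exact this
  -- no edges between F and F'
  have hcross : ∀ a ∈ F, ∀ b ∈ F', ¬ G.Adj a b := by
    intro a ha b hb hadj
    have haF₁ : a ∈ (F₁ : Set V) := by exact_mod_cast hsub ha
    have hbF₁ : b ∈ (F₁ : Set V) := by exact_mod_cast hsub' hb
    have hadj' : (G.induce (F₁ : Set V)).Adj ⟨a, haF₁⟩ ⟨b, hbF₁⟩ := by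
      simpa using hadj
    have hmem : (⟨b, hbF₁⟩ : ((F₁ : Set V) : Type _)) ∈
        ((G.induce (F₁ : Set V)).connectedComponentMk ⟨a, haF₁⟩).supp := by
      simp only [SimpleGraph.ConnectedComponent.mem_supp_iff]
      exact SimpleGraph.ConnectedComponent.sound hadj'.reachable.symm
    rw [hsuppF ⟨a, haF₁⟩ ha] at hmem
    exact hdisj b hmem hb
  -- get an edge inside F and inside F'
  have h2F : 1 < F.card := by omega
  obtain ⟨x, hx, y, hy, hxy⟩ := Finset.one_lt_card.mp h2F
  obtain ⟨u₀, v₀, huv⟩ := exists_adj_of_conn hconn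
    (show (⟨x, hx⟩ : (F : Set V)) ≠ ⟨y, hy⟩ by simp [Subtype.ext_iff, hxy])
  have h2F' : 1 < F'.card := by omega
  obtain ⟨x', hx', y', hy', hxy'⟩ := Finset.one_lt_card.mp h2F'
  obtain ⟨u₀', v₀', huv'⟩ := exists_adj_of_conn hconn'
    (show (⟨x', hx'⟩ : (F' : Set V)) ≠ ⟨y', hy'⟩ by simp [Subtype.ext_iff, hxy'])
  obtain ⟨u, hu⟩ := u₀
  obtain ⟨v, hv⟩ := v₀
  obtain ⟨u', hu'⟩ := u₀'
  obtain ⟨v', hv'⟩ := v₀'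
  have huvG : G.Adj u v := by simpa using huv
  have huvG' : G.Adj u' v' := by simpa using huv'
  have huigneF : u ∈ F := hu
  -- build the C4 in Gᶜ : u, u', v, v'
  have hcAdj : ∀ a ∈ F, ∀ b ∈ F', Gᶜ.Adj a b := by
    intro a ha b hb
    exact ⟨fun h => hdisj a ha (h ▸ hb), hcross a ha b hb⟩
  obtain ⟨f⟩ := c4_embed (hcAdj u hu u' hu') ((hcAdj v hv u' hu').symm)
    (hcAdj v hv v' hv') ((hcAdj u hu v' hv').symm)
    (fun h => h.2 huvG) (fun h => h.2 huvG') huvG.ne huvG'.ne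
  exact (hchord 4 (by norm_num)).false f
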